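/- For every x ∈ ℝ^n and every 0 < μ₁ < μ₂, the log-exponential aggregation function satisfies f(x;μ₁) < f(x;μ₂). -/

import Mathlib

open Real Filter

noncomputable section

variable {n m : ℕ}

/-- `g_i(x;μ) = √(‖x − c_i‖² + μ²)`. -/
def sebG (c : Fin m → EuclideanSpace ℝ (Fin n)) (μ : ℝ) (x : EuclideanSpace ℝ (Fin n))
    (i : Fin m) : ℝ :=
  Real.sqrt (‖x - c i‖ ^ 2 + μ ^ 2)

/-- `f_i(x;μ) = g_i(x;μ) + r_i`. -/
def sebFi (c : Fin m → EuclideanSpace ℝ (Fin n)) (r : Fin m → ℝ) (μ : ℝ)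
    (x : EuclideanSpace ℝ (Fin n)) (i : Fin m) : ℝ :=
  sebG c μ x i + r i

/-- the log-exponential aggregation function `f(x;μ) = μ ln(Σ_i exp(f_i(x;μ)/μ))`. -/
def sebFmu (c : Fin m → EuclideanSpace ℝ (Fin n)) (r : Fin m → ℝ) (μ : ℝ)
    (x : EuclideanSpace ℝ (Fin n)) : ℝ :=
  μ * Real.log (∑ i : Fin m, Real.exp (sebFi c r μ x i / μ))

/-- `f(x) = max_i (‖x − c_i‖ + r_i)`. -/
def sebF (c : Fin m → EuclideanSpace ℝ (Fin n)) (r : Fin m → ℝ)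
    (x : EuclideanSpace ℝ (Fin n)) : ℝ :=
  ⨆ i : Fin m, (‖x - c i‖ + r i)

/-- `f_∞(x;μ) = max_i f_i(x;μ)`. -/
def sebFinf (c : Fin m → EuclideanSpace ℝ (Fin n)) (r : Fin m → ℝ) (μ : ℝ)
    (x : EuclideanSpace ℝ (Fin n)) : ℝ :=
  ⨆ i : Fin m, sebFi c r μ x i

/-- `λ_i(x;μ)`. -/
def sebLam (c : Fin m → EuclideanSpace ℝ (Fin n)) (r : Fin m → ℝ) (μ : ℝ)
    (x : EuclideanSpace ℝ (Fin n)) (i : Fin m) : ℝ :=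
  Real.exp (sebFi c r μ x i / μ) / ∑ j : Fin m, Real.exp (sebFi c r μ x j / μ)

/-- `∇f_i(x;μ) = (x − c_i)/g_i(x;μ)`. -/
def sebGradI (c : Fin m → EuclideanSpace ℝ (Fin n)) (μ : ℝ)
    (x : EuclideanSpace ℝ (Fin n)) (i : Fin m) : EuclideanSpace ℝ (Fin n) :=
  (sebG c μ x i)⁻¹ • (x - c i)

/-- `∇f(x;μ) = Σ_i λ_i(x;μ) ∇f_i(x;μ)`. -/
def sebGrad (c : Fin m → EuclideanSpace ℝ (Fin n)) (r : Fin m → ℝ) (μ : ℝ)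
    (x : EuclideanSpace ℝ (Fin n)) : EuclideanSpace ℝ (Fin n) :=
  ∑ i : Fin m, sebLam c r μ x i • sebGradI c μ x i

/-- `S(x;μ,ε) = {i : λ_i(x;μ) ≥ ε}`. -/
def sebS (c : Fin m → EuclideanSpace ℝ (Fin n)) (r : Fin m → ℝ) (μ ε : ℝ)
    (x : EuclideanSpace ℝ (Fin n)) : Finset (Fin m) :=
  Finset.univ.filter (fun i => ε ≤ sebLam c r μ x i)

/-- `λ̃_i(x;μ)`. -/
def sebLamT (c : Fin m → EuclideanSpace ℝ (Fin n)) (r : Fin m → ℝ) (μ ε : ℝ)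
    (x : EuclideanSpace ℝ (Fin n)) (i : Fin m) : ℝ :=
  Real.exp (sebFi c r μ x i / μ) / ∑ j ∈ sebS c r μ ε x, Real.exp (sebFi c r μ x j / μ)

/-- the truncated log-exponential function `f̃(x;μ)`. -/
def sebFmuT (c : Fin m → EuclideanSpace ℝ (Fin n)) (r : Fin m → ℝ) (μ ε : ℝ)
    (x : EuclideanSpace ℝ (Fin n)) : ℝ :=
  μ * Real.log (∑ i ∈ sebS c r μ ε x, Real.exp (sebFi c r μ x i / μ))

/-- `∇f̃(x;μ) = Σ_{i∈S} λ̃_i(x;μ) ∇f_i(x;μ)`. -/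
def sebGradT (c : Fin m → EuclideanSpace ℝ (Fin n)) (r : Fin m → ℝ) (μ ε : ℝ)
    (x : EuclideanSpace ℝ (Fin n)) : EuclideanSpace ℝ (Fin n) :=
  ∑ i ∈ sebS c r μ ε x, sebLamT c r μ ε x i • sebGradI c μ x i

/-- `∇²f_i(x;μ) = (1/g_i) I_n − (x−c_i)(x−c_i)ᵀ/g_i³` as an `n×n` matrix. -/
def sebHessI (c : Fin m → EuclideanSpace ℝ (Fin n)) (μ : ℝ)
    (x : EuclideanSpace ℝ (Fin n)) (i : Fin m) : Matrix (Fin n) (Fin n) ℝ :=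
  (sebG c μ x i)⁻¹ • (1 : Matrix (Fin n) (Fin n) ℝ)
    - ((sebG c μ x i) ^ 3)⁻¹ •
        Matrix.vecMulVec (fun j => (x - c i) j) (fun j => (x - c i) j)

/-- `∇²f(x;μ)` as an `n×n` matrix. -/
def sebHess (c : Fin m → EuclideanSpace ℝ (Fin n)) (r : Fin m → ℝ) (μ : ℝ)
    (x : EuclideanSpace ℝ (Fin n)) : Matrix (Fin n) (Fin n) ℝ :=
  (∑ i : Fin m, (sebLam c r μ x i • sebHessI c μ x i
      + (μ⁻¹ * sebLam c r μ x i) •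
          Matrix.vecMulVec (fun j => sebGradI c μ x i j) (fun j => sebGradI c μ x i j)))
    - μ⁻¹ • Matrix.vecMulVec (fun j => sebGrad c r μ x j) (fun j => sebGrad c r μ x j)

/-- `∇²f̃(x;μ)` as an `n×n` matrix. -/
def sebHessT (c : Fin m → EuclideanSpace ℝ (Fin n)) (r : Fin m → ℝ) (μ ε : ℝ)
    (x : EuclideanSpace ℝ (Fin n)) : Matrix (Fin n) (Fin n) ℝ :=
  (∑ i ∈ sebS c r μ ε x, (sebLamT c r μ ε x i • sebHessI c μ x i
      + (μ⁻¹ * sebLamT c r μ ε x i) •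
          Matrix.vecMulVec (fun j => sebGradI c μ x i j) (fun j => sebGradI c μ x i j)))
    - μ⁻¹ • Matrix.vecMulVec (fun j => sebGradT c r μ ε x j) (fun j => sebGradT c r μ ε x j)

end


lemma sum_rpow_le_rpow_sum' {ι : Type*} (s : Finset ι) (f : ι → ℝ) (hf : ∀ i ∈ s, 0 < f i)
    {p : ℝ} (hp : 1 ≤ p) : ∑ i ∈ s, f i ^ p ≤ (∑ i ∈ s, f i) ^ p := by
  rcases s.eq_empty_or_nonempty with h | h
  · simp [h]
    positivity
  have hS : 0 < ∑ i ∈ s, f i := Finset.sum_pos hf h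
  calc ∑ i ∈ s, f i ^ p ≤ ∑ i ∈ s, f i * (∑ j ∈ s, f j) ^ (p - 1) := by
        refine Finset.sum_le_sum fun i hi => ?_
        have h1 : f i ^ p = f i * f i ^ (p - 1) := by
          rw [← Real.rpow_one_add' (le_of_lt (hf i hi)) (by linarith)]
          · ring_nf
        rw [h1]
        exact mul_le_mul_of_nonneg_left
          (Real.rpow_le_rpow (le_of_lt (hf i hi))
            (Finset.single_le_sum (fun j hj => le_of_lt (hf j hj)) hi) (by linarith))
          (le_of_lt (hf i hi))
      _ = (∑ i ∈ s, f i) ^ p := by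
        rw [← Finset.sum_mul, ← Real.rpow_one_add' (le_of_lt hS) (by linarith)]
        ring_nf

theorem stmt_0 (n m : ℕ) (hm : 1 ≤ m) (c : Fin m → EuclideanSpace ℝ (Fin n))
    (r : Fin m → ℝ) (hr : ∀ i, 0 ≤ r i) (x : EuclideanSpace ℝ (Fin n))
    (μ₁ μ₂ : ℝ) (hμ₁ : 0 < μ₁) (hμ₁₂ : μ₁ < μ₂) :
    sebFmu c r μ₁ x < sebFmu c r μ₂ x := by
  have hμ₂ : 0 < μ₂ := hμ₁.trans hμ₁₂
  have hne : (Finset.univ : Finset (Fin m)).Nonempty := ⟨⟨0, hm⟩, Finset.mem_univ _⟩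
  have ha : ∀ i, sebFi c r μ₁ x i < sebFi c r μ₂ x i := by
    intro i
    unfold sebFi sebG
    have h2 : μ₁ ^ 2 < μ₂ ^ 2 := by nlinarith
    have := Real.sqrt_lt_sqrt (by positivity)
      (by linarith : ‖x - c i‖ ^ 2 + μ₁ ^ 2 < ‖x - c i‖ ^ 2 + μ₂ ^ 2)
    linarith
  have hpos1 : 0 < ∑ i : Fin m, Real.exp (sebFi c r μ₁ x i / μ₁) :=
    Finset.sum_pos (fun i _ => Real.exp_pos _) hne
  have hpos2 : 0 < ∑ i : Fin m, Real.exp (sebFi c r μ₂ x i / μ₁) :=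
    Finset.sum_pos (fun i _ => Real.exp_pos _) hne
  have hpos3 : 0 < ∑ i : Fin m, Real.exp (sebFi c r μ₂ x i / μ₂) :=
    Finset.sum_pos (fun i _ => Real.exp_pos _) hne
  have stepA : sebFmu c r μ₁ x < μ₁ * Real.log (∑ i : Fin m, Real.exp (sebFi c r μ₂ x i / μ₁)) := by
    unfold sebFmu
    refine mul_lt_mul_of_pos_left (Real.log_lt_log hpos1 ?_) hμ₁
    refine Finset.sum_lt_sum_of_nonempty hne fun i _ => ?_
    exact Real.exp_lt_exp.2 (div_lt_div_of_pos_right (ha i) hμ₁)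
  have stepB : μ₁ * Real.log (∑ i : Fin m, Real.exp (sebFi c r μ₂ x i / μ₁)) ≤ sebFmu c r μ₂ x := by
    unfold sebFmu
    set p : ℝ := μ₂ / μ₁ with hp
    have hp1 : 1 ≤ p := (one_le_div hμ₁).2 hμ₁₂.le
    have key : ∑ i : Fin m, Real.exp (sebFi c r μ₂ x i / μ₁)
        ≤ (∑ i : Fin m, Real.exp (sebFi c r μ₂ x i / μ₂)) ^ p := by
      have heq : ∀ i : Fin m, Real.exp (sebFi c r μ₂ x i / μ₁)
          = Real.exp (sebFi c r μ₂ x i / μ₂) ^ p := by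
        intro i
        rw [← Real.exp_mul]
        congr 1
        field_simp
        rw [hp, mul_assoc, mul_div_assoc', mul_div_cancel_left₀ _ hμ₁.ne']
      rw [Finset.sum_congr rfl fun i _ => heq i]
      exact sum_rpow_le_rpow_sum' _ _ (fun i _ => Real.exp_pos _) hp1
    calc μ₁ * Real.log (∑ i : Fin m, Real.exp (sebFi c r μ₂ x i / μ₁))
        ≤ μ₁ * Real.log ((∑ i : Fin m, Real.exp (sebFi c r μ₂ x i / μ₂)) ^ p) :=
          mul_le_mul_of_nonneg_left (Real.log_le_log hpos2 key) hμ₁.le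
      _ = μ₂ * Real.log (∑ i : Fin m, Real.exp (sebFi c r μ₂ x i / μ₂)) := by
          rw [Real.log_rpow hpos3, hp]
          field_simp
  linarith
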